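/- Let α be a real number and let G = (V, E) be a graph containing no matching that saturates at least α vertices. Then there exists a partition {S, T, U} of V such that: (1) the subgraph of G induced on T has maximum degree less than √|V| − 1; (2) G contains no edge joining a vertex of T and a vertex of U; and (3) |U| + 2|S| < α + √|V|. -/

import Mathlib

open SimpleGraph

namespace TuttePartAux

set_option linter.unusedSectionVars false

variable {V : Type*} [Fintype V] {G : SimpleGraph V}

lemma matching_delete {M : G.Subgraph} (hM : M.IsMatching) {a b : V} (hab : M.Adj a b) :
    (M.deleteVerts {a, b}).IsMatching := by
  intro v hv
  rw [Subgraph.deleteVerts_verts, Set.mem_diff] at hv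
  obtain ⟨hvM, hvab⟩ := hv
  obtain ⟨u, hu, huniq⟩ := hM hvM
  have hub : u ∉ ({a, b} : Set V) := by
    intro h
    rcases h with h | h
    · subst h
      have : v = b := by
        obtain ⟨w, hw, hwuniq⟩ := hM (M.edge_vert hab)
        have h1 := hwuniq v hu.symm
        have h2 := hwuniq b hab
        exact h1.trans h2.symm
      exact hvab (by simp [this])
    · simp only [Set.mem_singleton_iff] at h
      subst h
      have : v = a := by
        obtain ⟨w, hw, hwuniq⟩ := hM (M.edge_vert hab.symm)
        have h1 := hwuniq v hu.symm
        have h2 := hwuniq a hab.symm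
        exact h1.trans h2.symm
      exact hvab (by simp [this])
  refine ⟨u, ?_, ?_⟩
  · simp only [Subgraph.deleteVerts_adj]
    exact ⟨hvM, hvab, M.edge_vert hu.symm, hub, hu⟩
  · intro y hy
    rw [Subgraph.deleteVerts_adj] at hy
    exact huniq y hy.2.2.2.2

lemma matching_sup_edge {M : G.Subgraph} (hM : M.IsMatching) {a b : V} (hab : G.Adj a b)
    (ha : a ∉ M.verts) (hb : b ∉ M.verts) :
    (M ⊔ G.subgraphOfAdj hab).IsMatching ∧ (M ⊔ G.subgraphOfAdj hab).verts = M.verts ∪ {a, b} := by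
  constructor
  · apply hM.sup (Subgraph.IsMatching.subgraphOfAdj hab)
    rw [hM.support_eq_verts, (Subgraph.IsMatching.subgraphOfAdj hab).support_eq_verts]
    rw [subgraphOfAdj_verts]
    rw [Set.disjoint_right]
    intro x hx
    rcases hx with h | h
    · subst h; exact ha
    · simp only [Set.mem_singleton_iff] at h; subst h; exact hb
  · rw [Subgraph.verts_sup, subgraphOfAdj_verts]


lemma ncard_union_pair {s : Set V} {w a : V} (hw : w ∉ s) (ha : a ∉ s) (hwa : w ≠ a) :
    (s ∪ {w, a}).ncard = s.ncard + 2 := by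
  rw [Set.ncard_union_eq (by simp [Set.disjoint_right, hw, ha, hwa]) s.toFinite (Set.toFinite _),
    Set.ncard_pair hwa]

lemma ncard_diff_pair {s : Set V} {w a : V} (hw : w ∈ s) (ha : a ∈ s) (hwa : w ≠ a) :
    s.ncard = (s \ {w, a}).ncard + 2 := by
  have h1 : (s \ {w, a}) ∪ {w, a} = s := by
    rw [Set.diff_union_self, Set.union_eq_self_of_subset_right]
    intro x hx
    rcases hx with h | h
    · exact h ▸ hw
    · simp only [Set.mem_singleton_iff] at h; exact h ▸ ha
  conv_lhs => rw [← h1]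
  exact ncard_union_pair (by simp) (by simp) hwa


def matchProp (G : SimpleGraph V) (W : Set V) (k : ℕ) : Prop :=
  ∃ M : G.Subgraph, M.IsMatching ∧ M.verts ⊆ W ∧ M.verts.ncard = k

noncomputable def nu (G : SimpleGraph V) (W : Set V) : ℕ :=
  @Nat.findGreatest (matchProp G W) (Classical.decPred _) (Fintype.card V)

lemma bot_isMatching (G : SimpleGraph V) : (⊥ : G.Subgraph).IsMatching := by
  intro v hv
  simp only [Subgraph.verts_bot, Set.mem_empty_iff_false] at hv

lemma le_nu {G : SimpleGraph V} {W : Set V} {M : G.Subgraph} (hM : M.IsMatching)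
    (hMW : M.verts ⊆ W) : M.verts.ncard ≤ nu G W := by
  have hb : M.verts.ncard ≤ Fintype.card V := by
    have := Set.ncard_le_ncard (Set.subset_univ M.verts) (Set.toFinite _)
    rwa [Set.ncard_univ, Nat.card_eq_fintype_card] at this
  letI : DecidablePred (matchProp G W) := Classical.decPred _
  unfold nu
  exact Nat.le_findGreatest hb ⟨M, hM, hMW, rfl⟩

lemma exists_max (G : SimpleGraph V) (W : Set V) :
    ∃ M : G.Subgraph, M.IsMatching ∧ M.verts ⊆ W ∧ M.verts.ncard = nu G W := by
  have h0 : matchProp G W 0 := ⟨⊥, bot_isMatching G, by simp, by simp⟩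
  by_cases h : nu G W = 0
  · rw [h]; exact h0
  · letI : DecidablePred (matchProp G W) := Classical.decPred _
    unfold nu
    exact Nat.findGreatest_spec (Nat.zero_le _) h0

lemma matching_even {G : SimpleGraph V} {M : G.Subgraph} (hM : M.IsMatching) :
    Even M.verts.ncard := by
  haveI : Fintype ↑M.verts := Fintype.ofFinite _
  rw [Set.ncard_eq_toFinset_card']
  exact hM.even_card


lemma exchange : ∀ (n : ℕ) (M N : G.Subgraph), (M.verts ∪ N.verts).ncard ≤ n →
    M.IsMatching → N.IsMatching → ∀ w, w ∈ M.verts → w ∉ N.verts →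
    (∃ K : G.Subgraph, K.IsMatching ∧ K.verts ⊆ M.verts ∪ N.verts ∧
      K.verts.ncard = N.verts.ncard + 2) ∨
    (∃ (M' : G.Subgraph) (x : V), M'.IsMatching ∧ M'.verts.ncard = M.verts.ncard ∧
      x ∉ M.verts ∧ x ∈ N.verts ∧ M'.verts ⊆ (M.verts \ {w}) ∪ {x}) := by
  intro n
  induction n with
  | zero =>
    intro M N hcard _ _ w hwM _
    exfalso
    have : w ∈ M.verts ∪ N.verts := Or.inl hwM
    have := Set.ncard_pos (Set.toFinite _) |>.mpr ⟨w, this⟩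
    omega
  | succ n ih =>
    intro M N hcard hM hN w hwM hwN
    obtain ⟨a, haw, hauniq⟩ := hM hwM
    have haG : G.Adj w a := M.adj_sub haw
    have hwa : w ≠ a := haG.ne
    have haM : a ∈ M.verts := M.edge_vert haw.symm
    by_cases haN : a ∈ N.verts
    · obtain ⟨b, hab, hbuniq⟩ := hN haN
      have habG : G.Adj a b := N.adj_sub hab
      have hab' : a ≠ b := habG.ne
      have hbN : b ∈ N.verts := N.edge_vert hab.symm
      have hbw : b ≠ w := fun h => hwN (h ▸ hbN)
      by_cases hbM : b ∈ M.verts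
      · -- recursive case
        set M₁ := M.deleteVerts {w, a} with hM₁def
        set N₁ := N.deleteVerts {a, b} with hN₁def
        have hM₁ : M₁.IsMatching := matching_delete hM haw
        have hN₁ : N₁.IsMatching := matching_delete hN hab
        have hM₁v : M₁.verts = M.verts \ {w, a} := Subgraph.deleteVerts_verts
        have hN₁v : N₁.verts = N.verts \ {a, b} := Subgraph.deleteVerts_verts
        have hsub : M₁.verts ∪ N₁.verts ⊆ (M.verts ∪ N.verts) \ {a} := by
          rw [hM₁v, hN₁v]
          intro x hx
          rcases hx with ⟨h1, h2⟩ | ⟨h1, h2⟩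
          · exact ⟨Or.inl h1, by simp_all⟩
          · exact ⟨Or.inr h1, by simp_all⟩
        have hmeas : (M₁.verts ∪ N₁.verts).ncard ≤ n := by
          have h1 := Set.ncard_le_ncard hsub (Set.toFinite _)
          have h2 : ((M.verts ∪ N.verts) \ {a}).ncard < (M.verts ∪ N.verts).ncard :=
            Set.ncard_diff_singleton_lt_of_mem (Or.inl haM) (Set.toFinite _)
          omega
        have hbM₁ : b ∈ M₁.verts := by
          rw [hM₁v]
          exact ⟨hbM, by simp [hbw, hab'.symm]⟩
        have hbN₁ : b ∉ N₁.verts := by rw [hN₁v]; simp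
        rcases ih M₁ N₁ hmeas hM₁ hN₁ b hbM₁ hbN₁ with ⟨K₁, hK₁, hK₁sub, hK₁card⟩ |
          ⟨M₁', x, hM₁', hM₁'card, hxM₁, hxN₁, hM₁'sub⟩
        · -- augmenting: add edge w a to K₁
          left
          have hwK : w ∉ K₁.verts := fun h => by
            rcases hK₁sub h with h' | h'
            · rw [hM₁v] at h'; simp at h'
            · rw [hN₁v] at h'; exact hwN h'.1
          have haK : a ∉ K₁.verts := fun h => by
            rcases hK₁sub h with h' | h'
            · rw [hM₁v] at h'; simp at h'
            · rw [hN₁v] at h'; simp at h'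
          obtain ⟨hKm, hKv⟩ := matching_sup_edge hK₁ haG hwK haK
          refine ⟨_, hKm, ?_, ?_⟩
          · rw [hKv]
            intro x hx
            rcases hx with h | h
            · rcases hK₁sub h with h' | h'
              · rw [hM₁v] at h'; exact Or.inl h'.1
              · rw [hN₁v] at h'; exact Or.inr h'.1
            · rcases h with h | h
              · exact Or.inl (h ▸ hwM)
              · simp only [Set.mem_singleton_iff] at h; exact Or.inl (h ▸ haM)
          · rw [hKv, ncard_union_pair hwK haK hwa, hK₁card, hN₁v,
              ← ncard_diff_pair haN hbN hab']
        · -- flipped matching: add edge a b to M₁'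
          right
          have hxa : x ≠ a := by rw [hN₁v] at hxN₁; simp_all
          have hxb : x ≠ b := by rw [hN₁v] at hxN₁; simp_all
          have haM₁' : a ∉ M₁'.verts := fun h => by
            rcases hM₁'sub h with ⟨h', _⟩ | h'
            · rw [hM₁v] at h'; simp at h'
            · simp only [Set.mem_singleton_iff] at h'; exact hxa h'.symm
          have hbM₁' : b ∉ M₁'.verts := fun h => by
            rcases hM₁'sub h with ⟨_, h'⟩ | h'
            · simp at h'
            · simp only [Set.mem_singleton_iff] at h'; exact hxb h'.symm
          obtain ⟨hMm, hMv⟩ := matching_sup_edge hM₁' habG haM₁' hbM₁'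
          have hxw : x ≠ w := fun h => hwN (h ▸ (by rw [hN₁v] at hxN₁; exact hxN₁.1))
          refine ⟨_, x, hMm, ?_, ?_, ?_, ?_⟩
          · rw [hMv, ncard_union_pair haM₁' hbM₁' hab', hM₁'card, hM₁v,
              ← ncard_diff_pair hwM haM hwa]
          · intro h
            have : x ∈ M₁.verts := by
              rw [hM₁v]
              exact ⟨h, by simp [hxw, hxa]⟩
            exact hxM₁ this
          · rw [hN₁v] at hxN₁; exact hxN₁.1
          · rw [hMv]
            intro y hy
            rcases hy with h | h
            · rcases hM₁'sub h with ⟨h', h''⟩ | h'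
              · rw [hM₁v] at h'
                exact Or.inl ⟨h'.1, by simp_all⟩
              · exact Or.inr h'
            · rcases h with h | h
              · exact Or.inl ⟨h ▸ haM, by simp [h, hwa.symm]⟩
              · simp only [Set.mem_singleton_iff] at h
                exact Or.inl ⟨h ▸ hbM, by simp [h, hbw]⟩
      · -- b not in M: terminal flip
        right
        have hdel : (M.deleteVerts {w, a}).IsMatching := matching_delete hM haw
        have hdelv : (M.deleteVerts {w, a}).verts = M.verts \ {w, a} :=
          Subgraph.deleteVerts_verts
        have haD : a ∉ (M.deleteVerts {w, a}).verts := by rw [hdelv]; simp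
        have hbD : b ∉ (M.deleteVerts {w, a}).verts := by rw [hdelv]; simp [hbM]
        obtain ⟨hMm, hMv⟩ := matching_sup_edge hdel habG haD hbD
        refine ⟨_, b, hMm, ?_, hbM, hbN, ?_⟩
        · rw [hMv, hdelv, ncard_union_pair (by simp) (by simp [hbM]) hab', ← ncard_diff_pair hwM haM hwa]
        · rw [hMv, hdelv]
          intro y hy
          rcases hy with ⟨h1, h2⟩ | h
          · exact Or.inl ⟨h1, by simp_all⟩
          · rcases h with h | h
            · exact Or.inl ⟨h ▸ haM, by simp [h, hwa.symm]⟩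
            · exact Or.inr h
    · -- a not in N: augment N with edge w a
      left
      obtain ⟨hKm, hKv⟩ := matching_sup_edge hN haG hwN haN
      refine ⟨_, hKm, ?_, ?_⟩
      · rw [hKv]
        intro x hx
        rcases hx with h | h
        · exact Or.inr h
        · rcases h with h | h
          · exact Or.inl (h ▸ hwM)
          · simp only [Set.mem_singleton_iff] at h; exact Or.inl (h ▸ haM)
      · rw [hKv, ncard_union_pair hwN haN hwa]


lemma gallai (G : SimpleGraph V) (W : Set V) (w₀ : V) (hw₀ : w₀ ∈ W)
    (hreach : ∀ v (hv : v ∈ W), (G.induce W).Reachable ⟨w₀, hw₀⟩ ⟨v, hv⟩)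
    (hiness : ∀ w ∈ W, ∃ N : G.Subgraph, N.IsMatching ∧ N.verts ⊆ W ∧
      N.verts.ncard = nu G W ∧ w ∉ N.verts) :
    W.ncard ≤ nu G W + 1 := by
  by_contra hcon
  push_neg at hcon
  set H := G.induce W with hHdef
  have Hpre : H.Preconnected := fun u v =>
    ((hreach u.1 u.2).symm.trans (hreach v.1 v.2))
  -- the set of pairs of distinct vertices both missed by a common maximum matching
  set D : Set (↥W × ↥W) := {p | p.1 ≠ p.2 ∧ ∃ M : G.Subgraph, M.IsMatching ∧ M.verts ⊆ W ∧
    M.verts.ncard = nu G W ∧ ↑p.1 ∉ M.verts ∧ ↑p.2 ∉ M.verts} with hDdef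
  have hDne : D.Nonempty := by
    obtain ⟨Mm, hMm, hMmW, hMmcard⟩ := exists_max G W
    have hdiff : 1 < (W \ Mm.verts).ncard := by
      rw [Set.ncard_diff hMmW (Set.toFinite _), hMmcard]
      omega
    rw [Set.one_lt_ncard (Set.toFinite _)] at hdiff
    obtain ⟨a, ha, b, hb, hab⟩ := hdiff
    exact ⟨(⟨a, ha.1⟩, ⟨b, hb.1⟩), fun he => hab (congrArg Subtype.val he),
      Mm, hMm, hMmW, hMmcard, ha.2, hb.2⟩
  obtain ⟨⟨u, v⟩, hmem, hminim⟩ := Set.exists_min_image D (fun p => H.dist p.1 p.2)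
    (Set.toFinite _) hDne
  obtain ⟨huv, M₀, hM₀m, hM₀W, hM₀card, huM₀, hvM₀⟩ := hmem
  simp only at huv huM₀ hvM₀
  set d := H.dist u v with hddef
  have hd0 : 0 < d := (Hpre u v).pos_dist_of_ne huv
  by_cases hd1 : d = 1
  · -- u, v adjacent and both exposed: augment, contradiction
    have hadj : H.Adj u v := dist_eq_one_iff_adj.mp hd1
    have hadjG : G.Adj ↑u ↑v := hadj
    obtain ⟨hKm, hKv⟩ := matching_sup_edge hM₀m hadjG huM₀ hvM₀
    have hKW : (M₀ ⊔ G.subgraphOfAdj hadjG).verts ⊆ W := by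
      rw [hKv]
      intro x hx
      rcases hx with hx | hx
      · exact hM₀W hx
      · rcases hx with hx | hx
        · exact hx ▸ u.2
        · simp only [Set.mem_singleton_iff] at hx; exact hx ▸ v.2
    have := le_nu hKm hKW
    rw [hKv, ncard_union_pair huM₀ hvM₀ (fun he => huv (Subtype.val_injective he)),
      hM₀card] at this
    omega
  · have hd2 : 2 ≤ d := by omega
    obtain ⟨p, hp⟩ := (Hpre u v).exists_walk_length_eq_dist
    cases p with
    | nil => rw [Walk.length_nil] at hp; omega
    | @cons _ w _ h q =>
      rw [Walk.length_cons] at hp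
      have hqlen : q.length = d - 1 := by omega
      have hwu : w ≠ u := h.ne'
      have hduw : H.dist u w = 1 := dist_eq_one_iff_adj.mpr h
      have hwv : w ≠ v := by
        intro he
        subst he
        exact hd1 (dist_eq_one_iff_adj.mpr h)
      have hdwv : H.dist w v ≤ d - 1 := hqlen ▸ dist_le q
      by_cases hwM₀ : ↑w ∈ M₀.verts
      · -- w is covered by M₀ but inessential; use the exchange lemma
        obtain ⟨N, hNm, hNW, hNcard, hwN⟩ := hiness ↑w w.2
        have hbound : (M₀.verts ∪ N.verts).ncard ≤ Fintype.card V := by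
          have := Set.ncard_le_ncard (Set.subset_univ (M₀.verts ∪ N.verts)) (Set.toFinite _)
          rwa [Set.ncard_univ, Nat.card_eq_fintype_card] at this
        rcases exchange (Fintype.card V) M₀ N hbound hM₀m hNm ↑w hwM₀ hwN with
          ⟨K, hKm, hKsub, hKcard⟩ | ⟨M', x, hM'm, hM'card, hxM₀, hxN, hM'sub⟩
        · have hKW : K.verts ⊆ W := hKsub.trans (Set.union_subset hM₀W hNW)
          have := le_nu hKm hKW
          rw [hKcard, hNcard] at this
          omega
        · have hM'W : M'.verts ⊆ W := by
            intro y hy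
            rcases hM'sub hy with ⟨hy1, _⟩ | hy1
            · exact hM₀W hy1
            · simp only [Set.mem_singleton_iff] at hy1; exact hy1 ▸ hNW hxN
          have hxw : x ≠ ↑w := fun he => hwN (he ▸ hxN)
          have hwM' : ↑w ∉ M'.verts := by
            intro hy
            rcases hM'sub hy with ⟨_, hy2⟩ | hy1
            · simp at hy2
            · simp only [Set.mem_singleton_iff] at hy1; exact hxw hy1.symm
          rw [hM₀card] at hM'card
          by_cases hxu : x = ↑u
          · have hvM' : ↑v ∉ M'.verts := by
              intro hy
              rcases hM'sub hy with ⟨hy1, _⟩ | hy1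
              · exact hvM₀ hy1
              · simp only [Set.mem_singleton_iff] at hy1
                exact huv (Subtype.val_injective (hy1.trans hxu).symm)
            have hwvD : (w, v) ∈ D := ⟨hwv, M', hM'm, hM'W, hM'card, hwM', hvM'⟩
            have := hminim _ hwvD
            simp only at this
            omega
          · have huM' : ↑u ∉ M'.verts := by
              intro hy
              rcases hM'sub hy with ⟨hy1, _⟩ | hy1
              · exact huM₀ hy1
              · simp only [Set.mem_singleton_iff] at hy1; exact hxu hy1.symm
            have huwD : (u, w) ∈ D := ⟨hwu.symm, M', hM'm, hM'W, hM'card, huM', hwM'⟩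
            have := hminim _ huwD
            simp only at this
            omega
      · -- w itself is exposed by M₀: (u, w) is a closer exposed pair
        have huwD : (u, w) ∈ D := ⟨hwu.symm, M₀, hM₀m, hM₀W, hM₀card, huM₀, hwM₀⟩
        have := hminim _ huwD
        simp only at this
        omega


theorem main (G : SimpleGraph V) (r : ℝ) (hr : 1 ≤ r) : ∀ (n : ℕ) (W : Set V), W.ncard ≤ n →
    ∃ (S T U : Set V) (M : G.Subgraph),
      S ∪ T ∪ U = W ∧ Disjoint S T ∧ Disjoint S U ∧ Disjoint T U ∧
      (∀ v ∈ T, ((G.neighborSet v ∩ T).ncard : ℝ) < r - 1) ∧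
      (∀ u ∈ T, ∀ v ∈ U, ¬ G.Adj u v) ∧
      M.IsMatching ∧ M.verts ⊆ W ∧
      ((U.ncard : ℝ) + 2 * S.ncard ≤ (M.verts.ncard : ℝ) + U.ncard / r) := by
  have hr0 : (0 : ℝ) < r := lt_of_lt_of_le one_pos hr
  intro n
  induction n with
  | zero =>
    intro W hW
    have hWe : W = ∅ := Set.ncard_eq_zero (Set.toFinite _) |>.mp (Nat.le_zero.mp hW)
    subst hWe
    exact ⟨∅, ∅, ∅, ⊥, by simp, by simp, by simp, by simp, by simp, by simp,
      bot_isMatching G, by simp, by simp⟩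
  | succ n ih =>
    intro W hW
    by_cases hWe : W = ∅
    · subst hWe
      exact ⟨∅, ∅, ∅, ⊥, by simp, by simp, by simp, by simp, by simp, by simp,
        bot_isMatching G, by simp, by simp⟩
    obtain ⟨w₀, hw₀⟩ := Set.nonempty_iff_ne_empty.mpr hWe
    by_cases hA : ∃ w ∈ W, ∀ M : G.Subgraph, M.IsMatching → M.verts ⊆ W →
        M.verts.ncard = nu G W → w ∈ M.verts
    · -- CASE A : an essential vertex w; put it into S and recurse on W \ {w}
      obtain ⟨w, hwW, hess⟩ := hA
      have hlt : (W \ {w}).ncard ≤ n := by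
        have := Set.ncard_diff_singleton_lt_of_mem hwW (Set.toFinite _)
        omega
      obtain ⟨S', T', U', M', hpart, hST, hSU, hTU, hdeg, hTUadj, hM'm, hM'W, hineq⟩ :=
        ih (W \ {w}) hlt
      obtain ⟨Mm, hMm, hMmW, hMmcard⟩ := exists_max G W
      have hT'sub : T' ⊆ W \ {w} := by
        rw [← hpart]; intro x hx; exact Or.inl (Or.inr hx)
      have hU'sub : U' ⊆ W \ {w} := by
        rw [← hpart]; intro x hx; exact Or.inr hx
      have hS'sub : S' ⊆ W \ {w} := by
        rw [← hpart]; intro x hx; exact Or.inl (Or.inl hx)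
      have hwS' : w ∉ S' := fun hc => (hS'sub hc).2 rfl
      have hwT' : w ∉ T' := fun hc => (hT'sub hc).2 rfl
      have hwU' : w ∉ U' := fun hc => (hU'sub hc).2 rfl
      refine ⟨insert w S', T', U', Mm, ?_, ?_, ?_, hTU, hdeg, hTUadj, hMm, hMmW, ?_⟩
      · rw [Set.insert_union, Set.insert_union, hpart, Set.insert_diff_singleton,
          Set.insert_eq_self.mpr hwW]
      · rw [Set.disjoint_left]
        intro a ha
        rcases Set.mem_insert_iff.mp ha with rfl | ha'
        · exact hwT'
        · exact Set.disjoint_left.mp hST ha'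
      · rw [Set.disjoint_left]
        intro a ha
        rcases Set.mem_insert_iff.mp ha with rfl | ha'
        · exact hwU'
        · exact Set.disjoint_left.mp hSU ha'
      · -- the size bound
        have hkey : M'.verts.ncard + 2 ≤ nu G W := by
          have hle : M'.verts.ncard ≤ nu G W :=
            le_nu hM'm (hM'W.trans Set.diff_subset)
          have hne : M'.verts.ncard ≠ nu G W := by
            intro he
            exact (hM'W (hess M' hM'm (hM'W.trans Set.diff_subset) he)).2 rfl
          obtain ⟨c1, hc1⟩ := matching_even hM'm
          obtain ⟨c2, hc2⟩ := hMmcard ▸ matching_even hMm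
          omega
        rw [Set.ncard_insert_of_notMem hwS' (Set.toFinite _)]
        have h2 : (M'.verts.ncard : ℝ) + 2 ≤ (Mm.verts.ncard : ℝ) := by
          rw [hMmcard]; exact_mod_cast hkey
        push_cast
        linarith
    · -- CASE B : every vertex is missed by some maximum matching
      push_neg at hA
      set W₁ : Set V := {v | ∃ hv : v ∈ W, (G.induce W).Reachable ⟨w₀, hw₀⟩ ⟨v, hv⟩}
        with hW₁def
      have hW₁W : W₁ ⊆ W := fun x hx => hx.1
      have hw₀1 : w₀ ∈ W₁ := ⟨hw₀, Reachable.refl _⟩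
      have hcross : ∀ x ∈ W₁, ∀ y ∈ W, G.Adj x y → y ∈ W₁ := by
        rintro x ⟨hxW, hxr⟩ y hyW hadj
        exact ⟨hyW, hxr.trans (SimpleGraph.Adj.reachable
          (by exact hadj : (G.induce W).Adj ⟨x, hxW⟩ ⟨y, hyW⟩))⟩
      by_cases hW₁ : W₁ = W
      · -- G[W] is connected; by the Gallai-type argument nu ≥ |W| - 1
        have hreach' : ∀ v (hv : v ∈ W), (G.induce W).Reachable ⟨w₀, hw₀⟩ ⟨v, hv⟩ := by
          intro v hv
          have : v ∈ W₁ := hW₁ ▸ hv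
          obtain ⟨hv', hr'⟩ := this
          exact hr'
        have hν := gallai G W w₀ hw₀ hreach' hA
        by_cases hsmall : (W.ncard : ℝ) < r
        · -- small connected piece: put all of it in T
          refine ⟨∅, W, ∅, ⊥, by simp, by simp, by simp, by simp, ?_, by simp,
            bot_isMatching G, by simp, by simp⟩
          intro v hv
          have hsub : G.neighborSet v ∩ W ⊆ W \ {v} := by
            rintro x ⟨hx1, hx2⟩
            refine ⟨hx2, ?_⟩
            simp only [Set.mem_singleton_iff]
            rintro rfl
            rw [mem_neighborSet] at hx1
            exact G.irrefl hx1
          have hle : (G.neighborSet v ∩ W).ncard ≤ W.ncard - 1 := by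
            have := Set.ncard_le_ncard hsub (Set.toFinite _)
            rwa [Set.ncard_diff_singleton_of_mem hv] at this
          have hpos : 1 ≤ W.ncard := Set.ncard_pos (Set.toFinite _) |>.mpr ⟨v, hv⟩
          have : ((G.neighborSet v ∩ W).ncard : ℝ) ≤ (W.ncard : ℝ) - 1 := by
            calc ((G.neighborSet v ∩ W).ncard : ℝ) ≤ ((W.ncard - 1 : ℕ) : ℝ) :=
                Nat.cast_le.mpr hle
              _ = (W.ncard : ℝ) - 1 := by
                rw [Nat.cast_sub hpos, Nat.cast_one]
          linarith
        · -- large connected piece: put all of it in U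
          push_neg at hsmall
          obtain ⟨Mm, hMm, hMmW, hMmcard⟩ := exists_max G W
          refine ⟨∅, ∅, W, Mm, by simp, by simp, by simp, by simp, by simp, by simp,
            hMm, hMmW, ?_⟩
          have h1 : (1 : ℝ) ≤ (W.ncard : ℝ) / r := (one_le_div hr0).mpr hsmall
          have h2 : (W.ncard : ℝ) ≤ (Mm.verts.ncard : ℝ) + 1 := by
            rw [hMmcard]; exact_mod_cast hν
          simp only [Set.ncard_empty, Nat.cast_zero]
          linarith
      · -- G[W] is disconnected: recurse on W₁ and W \ W₁ separately
        set W₂ : Set V := W \ W₁ with hW₂def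
        have hd12 : Disjoint W₁ W₂ := Set.disjoint_sdiff_right
        have hn1 : W₁.ncard ≤ n := by
          have := Set.ncard_lt_ncard (Set.ssubset_iff_subset_ne.mpr ⟨hW₁W, hW₁⟩)
            (Set.toFinite _)
          omega
        have hn2 : W₂.ncard ≤ n := by
          have hss : W₂ ⊂ W := by
            rw [Set.ssubset_iff_subset_ne]
            refine ⟨Set.diff_subset, fun he => ?_⟩
            have : w₀ ∈ W₂ := he ▸ hw₀
            exact this.2 hw₀1
          have := Set.ncard_lt_ncard hss (Set.toFinite _)
          omega
        obtain ⟨S₁, T₁, U₁, M₁, hpart₁, hST₁, hSU₁, hTU₁, hdeg₁, hTUadj₁, hM₁m, hM₁W, hineq₁⟩ :=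
          ih W₁ hn1
        obtain ⟨S₂, T₂, U₂, M₂, hpart₂, hST₂, hSU₂, hTU₂, hdeg₂, hTUadj₂, hM₂m, hM₂W, hineq₂⟩ :=
          ih W₂ hn2
        have hS₁ : S₁ ⊆ W₁ := by rw [← hpart₁]; intro x hx; exact Or.inl (Or.inl hx)
        have hT₁ : T₁ ⊆ W₁ := by rw [← hpart₁]; intro x hx; exact Or.inl (Or.inr hx)
        have hU₁ : U₁ ⊆ W₁ := by rw [← hpart₁]; intro x hx; exact Or.inr hx
        have hS₂ : S₂ ⊆ W₂ := by rw [← hpart₂]; intro x hx; exact Or.inl (Or.inl hx)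
        have hT₂ : T₂ ⊆ W₂ := by rw [← hpart₂]; intro x hx; exact Or.inl (Or.inr hx)
        have hU₂ : U₂ ⊆ W₂ := by rw [← hpart₂]; intro x hx; exact Or.inr hx
        have hnc : ∀ x ∈ W₁, ∀ y ∈ W₂, ¬ G.Adj x y :=
          fun x hx y hy hadj => hy.2 (hcross x hx y hy.1 hadj)
        refine ⟨S₁ ∪ S₂, T₁ ∪ T₂, U₁ ∪ U₂, M₁ ⊔ M₂, ?_, ?_, ?_, ?_, ?_, ?_, ?_, ?_, ?_⟩
        · have : S₁ ∪ S₂ ∪ (T₁ ∪ T₂) ∪ (U₁ ∪ U₂) = (S₁ ∪ T₁ ∪ U₁) ∪ (S₂ ∪ T₂ ∪ U₂) := by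
            ext x; simp only [Set.mem_union]; tauto
          rw [this, hpart₁, hpart₂, Set.union_diff_cancel hW₁W]
        · exact Set.disjoint_union_left.mpr
            ⟨Set.disjoint_union_right.mpr ⟨hST₁, hd12.mono hS₁ hT₂⟩,
             Set.disjoint_union_right.mpr ⟨(hd12.symm).mono hS₂ hT₁, hST₂⟩⟩
        · exact Set.disjoint_union_left.mpr
            ⟨Set.disjoint_union_right.mpr ⟨hSU₁, hd12.mono hS₁ hU₂⟩,
             Set.disjoint_union_right.mpr ⟨(hd12.symm).mono hS₂ hU₁, hSU₂⟩⟩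
        · exact Set.disjoint_union_left.mpr
            ⟨Set.disjoint_union_right.mpr ⟨hTU₁, hd12.mono hT₁ hU₂⟩,
             Set.disjoint_union_right.mpr ⟨(hd12.symm).mono hT₂ hU₁, hTU₂⟩⟩
        · -- degree condition
          intro v hv
          rcases hv with hv | hv
          · have he : G.neighborSet v ∩ (T₁ ∪ T₂) = G.neighborSet v ∩ T₁ := by
              ext x
              simp only [Set.mem_inter_iff, Set.mem_union, mem_neighborSet]
              constructor
              · rintro ⟨hadj, hx | hx⟩
                · exact ⟨hadj, hx⟩
                · exact absurd hadj (hnc v (hT₁ hv) x (hT₂ hx))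
              · rintro ⟨hadj, hx⟩; exact ⟨hadj, Or.inl hx⟩
            rw [he]
            exact hdeg₁ v hv
          · have he : G.neighborSet v ∩ (T₁ ∪ T₂) = G.neighborSet v ∩ T₂ := by
              ext x
              simp only [Set.mem_inter_iff, Set.mem_union, mem_neighborSet]
              constructor
              · rintro ⟨hadj, hx | hx⟩
                · exact absurd hadj.symm (hnc x (hT₁ hx) v (hT₂ hv))
                · exact ⟨hadj, hx⟩
              · rintro ⟨hadj, hx⟩; exact ⟨hadj, Or.inr hx⟩
            rw [he]
            exact hdeg₂ v hv
        · -- no T-U edges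
          rintro u (hu | hu) v (hv | hv)
          · exact hTUadj₁ u hu v hv
          · exact hnc u (hT₁ hu) v (hU₂ hv)
          · exact fun hadj => hnc v (hU₁ hv) u (hT₂ hu) hadj.symm
          · exact hTUadj₂ u hu v hv
        · -- matching
          apply hM₁m.sup hM₂m
          rw [hM₁m.support_eq_verts, hM₂m.support_eq_verts]
          exact hd12.mono hM₁W hM₂W
        · rw [Subgraph.verts_sup]
          exact Set.union_subset (hM₁W.trans hW₁W) (hM₂W.trans Set.diff_subset)
        · -- the size bound adds up
          rw [Subgraph.verts_sup,
            Set.ncard_union_eq (hd12.mono hM₁W hM₂W) (Set.toFinite _) (Set.toFinite _),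
            Set.ncard_union_eq (hd12.mono hU₁ hU₂) (Set.toFinite _) (Set.toFinite _),
            Set.ncard_union_eq (hd12.mono hS₁ hS₂) (Set.toFinite _) (Set.toFinite _)]
          push_cast
          have hdiv : ((U₁.ncard : ℝ) + U₂.ncard) / r = U₁.ncard / r + U₂.ncard / r :=
            add_div _ _ _
          linarith


end TuttePartAux

/-- If a graph `G` on a finite vertex set `V` contains no matching saturating at least
`α` vertices, then there is a partition `{S, T, U}` of `V` such that every vertex of
`T` has fewer than `√|V| − 1` neighbors in `T`, there is no edge between `T` and `U`,
and `|U| + 2|S| < α + √|V|`. -/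
theorem tutte_partition_of_no_large_matching {V : Type*} [Fintype V]
    (G : SimpleGraph V) (α : ℝ)
    (h : ¬ ∃ M : G.Subgraph, M.IsMatching ∧ α ≤ (M.verts.ncard : ℝ)) :
    ∃ S T U : Set V, S ∪ T ∪ U = Set.univ ∧
      Disjoint S T ∧ Disjoint S U ∧ Disjoint T U ∧
      (∀ v ∈ T, ((G.neighborSet v ∩ T).ncard : ℝ) < Real.sqrt (Fintype.card V) - 1) ∧
      (∀ u ∈ T, ∀ v ∈ U, ¬ G.Adj u v) ∧
      (U.ncard : ℝ) + 2 * (S.ncard : ℝ) < α + Real.sqrt (Fintype.card V) := by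
  classical
  push_neg at h
  by_cases hV : Fintype.card V = 0
  · haveI hem : IsEmpty V := Fintype.card_eq_zero_iff.mp hV
    have hα : (0 : ℝ) < α := by
      have := h ⊥ (TuttePartAux.bot_isMatching G)
      simpa using this
    refine ⟨∅, ∅, ∅, ?_, by simp, by simp, by simp, by simp, by simp, ?_⟩
    · rw [Set.univ_eq_empty_iff.mpr hem]
      simp
    · simp only [Set.ncard_empty, Nat.cast_zero, hV, Real.sqrt_zero]
      linarith
  · have hc1 : 1 ≤ Fintype.card V := Nat.one_le_iff_ne_zero.mpr hV
    set r := Real.sqrt (Fintype.card V) with hrdef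
    have hr : 1 ≤ r := Real.one_le_sqrt.mpr (by exact_mod_cast hc1)
    have hr0 : (0 : ℝ) < r := lt_of_lt_of_le one_pos hr
    obtain ⟨S, T, U, M, hpart, hST, hSU, hTU, hdeg, hTUadj, hMm, _, hineq⟩ :=
      TuttePartAux.main G r hr (Fintype.card V) Set.univ
        (by rw [Set.ncard_univ, Nat.card_eq_fintype_card])
    refine ⟨S, T, U, hpart, hST, hSU, hTU, hdeg, hTUadj, ?_⟩
    have hMα := h M hMm
    have hUcard : (U.ncard : ℝ) ≤ (Fintype.card V : ℝ) := by
      have := Set.ncard_le_ncard (Set.subset_univ U) (Set.toFinite _)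
      rw [Set.ncard_univ, Nat.card_eq_fintype_card] at this
      exact_mod_cast this
    have hdivle : (U.ncard : ℝ) / r ≤ (Fintype.card V : ℝ) / r := by gcongr
    have hds : ((Fintype.card V : ℝ)) / r = r := Real.div_sqrt
    linarith
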